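/- In the cooperative model with p < 1/2, Z_n tends to 0 almost surely; in particular simultaneous survival of both types is impossible. -/

import Mathlib

open MeasureTheory ProbabilityTheory Filter
open scoped ENNReal

/-- Convolution of two measures on `ℕ`. -/
noncomputable def mconv (μ ν : Measure ℕ) : Measure ℕ :=
  Measure.map (fun p : ℕ × ℕ => p.1 + p.2) (μ.prod ν)

/-- `i`-fold convolution power of a measure on `ℕ`. -/
noncomputable def convPow (ν : Measure ℕ) : ℕ → Measure ℕ
  | 0 => Measure.dirac 0
  | n + 1 => mconv (convPow ν n) ν

/-- The Bernoulli measure with parameter `r` on `ℕ`. -/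
noncomputable def bern (r : ℝ) : Measure ℕ :=
  ENNReal.ofReal (1 - r) • Measure.dirac 0 + ENNReal.ofReal r • Measure.dirac 1

/-- The binomial distribution `Bin(n, r)` as a measure on `ℕ`. -/
noncomputable def binomM (n : ℕ) (r : ℝ) : Measure ℕ := convPow (bern r) n

/-- Transition measure of the cooperative model from state `(x, y)`:
`Ber(2,q)^{*(x+y)} ⊗ Ber(2,p)^{*min(x,y)}`. -/
noncomputable def coopStep (p q : ℝ) (x y : ℕ) : Measure (ℕ × ℕ) :=
  (binomM (2 * (x + y)) q).prod (binomM (2 * min x y) p)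

/-- `(XY n)` is the cooperative two-type Markov chain with parameters `p, q`
started from `(x, y)`, characterized by its finite-dimensional distributions. -/
def IsCoop {Ω : Type*} [MeasurableSpace Ω] (P : Measure Ω)
    (XY : ℕ → Ω → ℕ × ℕ) (p q : ℝ) (x y : ℕ) : Prop :=
  ∀ n : ℕ, ∀ a : ℕ → ℕ × ℕ,
    P {ω | ∀ k ≤ n, XY k ω = a k} =
      (if a 0 = (x, y) then 1 else 0) *
        ∏ k ∈ Finset.range n, coopStep p q (a k).1 (a k).2 {a (k + 1)}

namespace CoopAux

lemma measurableSet_nn (s : Set (ℕ × ℕ)) : MeasurableSet s :=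
  (Set.to_countable s).measurableSet

lemma measurable_nn {β : Type*} [MeasurableSpace β] (f : ℕ × ℕ → β) : Measurable f :=
  fun s _ => measurableSet_nn _

noncomputable def mean (μ : Measure ℕ) : ℝ≥0∞ := ∫⁻ k, (k : ℝ≥0∞) ∂μ

lemma bern_prob {r : ℝ} (h0 : 0 ≤ r) (h1 : r ≤ 1) : IsProbabilityMeasure (bern r) := by
  constructor
  simp [bern, ← ENNReal.ofReal_add (by linarith : (0:ℝ) ≤ 1 - r) h0]

lemma mconv_prob (μ ν : Measure ℕ) [IsProbabilityMeasure μ] [IsProbabilityMeasure ν] :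
    IsProbabilityMeasure (mconv μ ν) := by
  constructor
  rw [mconv, Measure.map_apply (measurable_nn _) MeasurableSet.univ]
  simp

lemma binomM_prob (n : ℕ) {r : ℝ} (h0 : 0 ≤ r) (h1 : r ≤ 1) :
    IsProbabilityMeasure (binomM n r) := by
  induction n with
  | zero => exact ⟨by simp [binomM, convPow]⟩
  | succ n ih =>
      haveI := ih
      haveI := bern_prob h0 h1
      exact mconv_prob (binomM n r) (bern r)

lemma mean_bern {r : ℝ} : mean (bern r) = ENNReal.ofReal r := by
  simp [mean, bern, lintegral_smul_measure, lintegral_dirac]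

lemma mean_mconv (μ ν : Measure ℕ) [IsProbabilityMeasure μ] [IsProbabilityMeasure ν] :
    mean (mconv μ ν) = mean μ + mean ν := by
  rw [mean, mconv, lintegral_map (measurable_from_top) (measurable_nn _)]
  have : ∀ z : ℕ × ℕ, ((z.1 + z.2 : ℕ) : ℝ≥0∞) = (z.1 : ℝ≥0∞) + (z.2 : ℝ≥0∞) := by
    intro z; push_cast; ring
  rw [lintegral_congr this, lintegral_add_left (measurable_nn _)]
  rw [lintegral_prod _ ((measurable_nn _).aemeasurable),
      lintegral_prod _ ((measurable_nn _).aemeasurable)]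
  simp [lintegral_const, mean, measure_univ]

lemma mean_binomM (n : ℕ) {r : ℝ} (h0 : 0 ≤ r) (h1 : r ≤ 1) :
    mean (binomM n r) = n * ENNReal.ofReal r := by
  induction n with
  | zero => simp [binomM, convPow, mean, lintegral_dirac]
  | succ n ih =>
      haveI := binomM_prob n h0 h1
      haveI := bern_prob h0 h1
      have : binomM (n + 1) r = mconv (binomM n r) (bern r) := rfl
      rw [this, mean_mconv, ih, mean_bern]
      push_cast; ring

lemma cast_min (u v : ℕ) : ((u ⊓ v : ℕ) : ℝ≥0∞) = (u : ℝ≥0∞) ⊓ (v : ℝ≥0∞) := by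
  rcases le_total u v with h | h <;>
    simp [min_eq_left, min_eq_right, h, (Nat.cast_le (α := ℝ≥0∞)).2 h]

lemma step_min_le {p q : ℝ} (hp0 : 0 ≤ p) (hp1 : p ≤ 1) (hq0 : 0 ≤ q) (hq1 : q ≤ 1)
    (u v : ℕ) :
    ∑' b : ℕ × ℕ, (min b.1 b.2 : ℝ≥0∞) * coopStep p q u v {b}
      ≤ ENNReal.ofReal (2 * p) * (min u v : ℝ≥0∞) := by
  haveI := binomM_prob (2 * (u + v)) hq0 hq1
  haveI := binomM_prob (2 * min u v) hp0 hp1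
  rw [← lintegral_countable' (fun b : ℕ × ℕ => (min b.1 b.2 : ℝ≥0∞))]
  have h1 : ∫⁻ b, (min b.1 b.2 : ℝ≥0∞) ∂(coopStep p q u v)
      ≤ ∫⁻ b : ℕ × ℕ, (b.2 : ℝ≥0∞) ∂(coopStep p q u v) := by
    exact lintegral_mono fun b => min_le_right _ _
  refine h1.trans ?_
  rw [coopStep, lintegral_prod _ ((measurable_nn _).aemeasurable)]
  simp only [lintegral_const, measure_univ, mul_one]
  rw [show (∫⁻ (y : ℕ), (y : ℝ≥0∞) ∂binomM (2 * (u ⊓ v)) p) = mean (binomM (2 * (u ⊓ v)) p)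
      from rfl, mean_binomM _ hp0 hp1, ENNReal.ofReal_mul (by norm_num : (0:ℝ) ≤ 2),
     ENNReal.ofReal_ofNat]
  rw [Nat.cast_mul, cast_min, Nat.cast_ofNat]
  exact le_of_eq (by ring)

lemma step_min_le' {p q : ℝ} (hp0 : 0 ≤ p) (hp1 : p ≤ 1) (hq0 : 0 ≤ q) (hq1 : q ≤ 1)
    (u v : ℕ) :
    ∑' b : ℕ × ℕ, ((min b.1 b.2 : ℕ) : ℝ≥0∞) * coopStep p q u v {b}
      ≤ ENNReal.ofReal (2 * p) * ((min u v : ℕ) : ℝ≥0∞) := by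
  simp only [cast_min]
  exact step_min_le hp0 hp1 hq0 hq1 u v

/-- extension of a finite path to `ℕ`. -/
def ext (n : ℕ) (v : Fin n → ℕ × ℕ) : ℕ → ℕ × ℕ :=
  fun k => if h : k < n then v ⟨k, h⟩ else (0, 0)

/-- weight of a path. -/
noncomputable def W (p q : ℝ) (x y : ℕ) (n : ℕ) (a : ℕ → ℕ × ℕ) : ℝ≥0∞ :=
  (if a 0 = (x, y) then 1 else 0) *
    ∏ k ∈ Finset.range n, coopStep p q (a k).1 (a k).2 {a (k + 1)}

lemma W_congr {p q : ℝ} {x y n : ℕ} {a a' : ℕ → ℕ × ℕ} (h : ∀ k ≤ n, a k = a' k) :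
    W p q x y n a = W p q x y n a' := by
  unfold W
  rw [h 0 (Nat.zero_le _)]
  congr 1
  refine Finset.prod_congr rfl fun k hk => ?_
  rw [Finset.mem_range] at hk
  rw [h k (by omega), h (k + 1) (by omega)]

/-- Expected value of `min` along paths of length `n`. -/
noncomputable def T (p q : ℝ) (x y : ℕ) (n : ℕ) : ℝ≥0∞ :=
  ∑' v : Fin (n + 1) → ℕ × ℕ,
    ((min (v (Fin.last n)).1 (v (Fin.last n)).2 : ℕ) : ℝ≥0∞) * W p q x y n (ext (n + 1) v)

lemma T_zero (p q : ℝ) (x y : ℕ) : T p q x y 0 = ((min x y : ℕ) : ℝ≥0∞) := by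
  rw [T, ← Equiv.tsum_eq (Equiv.funUnique (Fin 1) (ℕ × ℕ)).symm]
  have h : ∀ b : ℕ × ℕ,
      ((min (((Equiv.funUnique (Fin 1) (ℕ × ℕ)).symm b) (Fin.last 0)).1
          (((Equiv.funUnique (Fin 1) (ℕ × ℕ)).symm b) (Fin.last 0)).2 : ℕ) : ℝ≥0∞) *
        W p q x y 0 (ext 1 ((Equiv.funUnique (Fin 1) (ℕ × ℕ)).symm b)) =
      if b = (x, y) then ((min x y : ℕ) : ℝ≥0∞) else 0 := by
    intro b
    have he : ext 1 ((Equiv.funUnique (Fin 1) (ℕ × ℕ)).symm b) 0 = b := rfl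
    have hl : ((Equiv.funUnique (Fin 1) (ℕ × ℕ)).symm b) (Fin.last 0) = b := rfl
    rw [hl, W, he]
    by_cases hb : b = (x, y)
    · subst hb; simp
    · simp [hb]
  rw [tsum_congr h, tsum_ite_eq]

lemma W_snoc {p q : ℝ} {x y n : ℕ} (w : Fin (n + 1) → ℕ × ℕ) (b : ℕ × ℕ) :
    W p q x y (n + 1) (ext (n + 2) (Fin.snoc w b)) =
      W p q x y n (ext (n + 1) w) *
        coopStep p q (w (Fin.last n)).1 (w (Fin.last n)).2 {b} := by
  have ha : ∀ k ≤ n, ext (n + 2) (Fin.snoc w b) k = ext (n + 1) w k := by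
    intro k hk
    have h1 : k < n + 1 := by omega
    have h2 : k < n + 2 := by omega
    simp only [ext, dif_pos h1, dif_pos h2]
    have hc : (⟨k, h2⟩ : Fin (n + 2)) = Fin.castSucc ⟨k, h1⟩ := rfl
    rw [hc, Fin.snoc_castSucc]
  have hn : ext (n + 2) (Fin.snoc w b) n = w (Fin.last n) := by
    have h2 : n < n + 2 := by omega
    simp only [ext, dif_pos h2]
    have hc : (⟨n, h2⟩ : Fin (n + 2)) = Fin.castSucc (Fin.last n) := rfl
    rw [hc, Fin.snoc_castSucc]
  have hb : ext (n + 2) (Fin.snoc w b) (n + 1) = b := by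
    have h2 : n + 1 < n + 2 := by omega
    simp only [ext, dif_pos h2]
    have hc : (⟨n + 1, h2⟩ : Fin (n + 2)) = Fin.last (n + 1) := rfl
    rw [hc, Fin.snoc_last]
  rw [W, Finset.prod_range_succ, ← mul_assoc, hn, hb]
  congr 1
  show W p q x y n (ext (n + 2) (Fin.snoc w b)) = W p q x y n (ext (n + 1) w)
  exact W_congr ha

lemma T_succ_le {p q : ℝ} (hp0 : 0 ≤ p) (hp1 : p ≤ 1) (hq0 : 0 ≤ q) (hq1 : q ≤ 1)
    (x y n : ℕ) :
    T p q x y (n + 1) ≤ ENNReal.ofReal (2 * p) * T p q x y n := by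
  calc T p q x y (n + 1)
      = ∑' (b : ℕ × ℕ) (w : Fin (n + 1) → ℕ × ℕ),
          ((min b.1 b.2 : ℕ) : ℝ≥0∞) *
            (W p q x y n (ext (n + 1) w) *
              coopStep p q (w (Fin.last n)).1 (w (Fin.last n)).2 {b}) := by
        rw [T, ← Equiv.tsum_eq (Fin.snocEquiv (fun _ : Fin (n + 2) => ℕ × ℕ)),
          ENNReal.tsum_prod']
        refine tsum_congr fun b => tsum_congr fun w => ?_
        show ((min ((Fin.snoc w b : Fin (n + 2) → ℕ × ℕ) (Fin.last (n + 1))).1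
            ((Fin.snoc w b : Fin (n + 2) → ℕ × ℕ) (Fin.last (n + 1))).2 : ℕ) : ℝ≥0∞) *
            W p q x y (n + 1) (ext (n + 2) (Fin.snoc w b)) = _
        rw [Fin.snoc_last, W_snoc]
    _ = ∑' (w : Fin (n + 1) → ℕ × ℕ), W p q x y n (ext (n + 1) w) *
          ∑' (b : ℕ × ℕ), ((min b.1 b.2 : ℕ) : ℝ≥0∞) *
            coopStep p q (w (Fin.last n)).1 (w (Fin.last n)).2 {b} := by
        rw [ENNReal.tsum_comm]
        refine tsum_congr fun w => ?_
        rw [← ENNReal.tsum_mul_left]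
        exact tsum_congr fun b => by ring
    _ ≤ ∑' (w : Fin (n + 1) → ℕ × ℕ), W p q x y n (ext (n + 1) w) *
          (ENNReal.ofReal (2 * p) *
            ((min (w (Fin.last n)).1 (w (Fin.last n)).2 : ℕ) : ℝ≥0∞)) :=
        ENNReal.tsum_le_tsum fun w =>
          mul_le_mul_right (step_min_le' hp0 hp1 hq0 hq1 _ _) _
    _ = ENNReal.ofReal (2 * p) * T p q x y n := by
        rw [T, ← ENNReal.tsum_mul_left]
        exact tsum_congr fun w => by ring

lemma T_le {p q : ℝ} (hp0 : 0 ≤ p) (hp1 : p ≤ 1) (hq0 : 0 ≤ q) (hq1 : q ≤ 1)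
    (x y n : ℕ) :
    T p q x y n ≤ ENNReal.ofReal (2 * p) ^ n * ((min x y : ℕ) : ℝ≥0∞) := by
  induction n with
  | zero => simp [T_zero]
  | succ n ih =>
      refine (T_succ_le hp0 hp1 hq0 hq1 x y n).trans ?_
      refine (mul_le_mul_right ih _).trans (le_of_eq ?_)
      ring

end CoopAux

/-- In the cooperative model with `p < 1/2`, `Z n = min(X n, Y n)` tends to `0`
almost surely; in particular simultaneous survival of both types is
impossible. -/
theorem coop_subcritical_extinction {Ω : Type*} [MeasurableSpace Ω]
    (P : Measure Ω) [IsProbabilityMeasure P]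
    (p q : ℝ) (hp0 : 0 ≤ p) (hp : p < 1 / 2) (hq0 : 0 ≤ q) (hq1 : q ≤ 1)
    (x y : ℕ) (XY : ℕ → Ω → ℕ × ℕ) (hXY : IsCoop P XY p q x y) :
    (∀ᵐ ω ∂P, Tendsto (fun n => min (XY n ω).1 (XY n ω).2) atTop (nhds 0)) ∧
      P {ω | ∀ n : ℕ, min (XY n ω).1 (XY n ω).2 ≠ 0} = 0 := by
  classical
  set r : ℝ≥0∞ := ENNReal.ofReal (2 * p) with hr
  have hp1 : p ≤ 1 := by linarith
  have hr1 : r < 1 := by rw [hr]; exact ENNReal.ofReal_lt_one.2 (by linarith)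
  set M : ℝ≥0∞ := ((min x y : ℕ) : ℝ≥0∞) with hM
  set S : ℕ → Set Ω := fun n => {ω | min (XY n ω).1 (XY n ω).2 ≠ 0} with hSdef
  have hS : ∀ n, P (S n) ≤ CoopAux.T p q x y n := by
    intro n
    have hsub : S n ⊆ ⋃ v : Fin (n + 1) → ℕ × ℕ,
        {ω | (∀ k ≤ n, XY k ω = CoopAux.ext (n + 1) v k) ∧
          min (v (Fin.last n)).1 (v (Fin.last n)).2 ≠ 0} := by
      intro ω hω
      refine Set.mem_iUnion.2 ⟨fun i => XY (i : ℕ) ω, fun k hk => ?_, ?_⟩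
      · have hk1 : k < n + 1 := by omega
        simp only [CoopAux.ext, dif_pos hk1]
      · exact hω
    refine (measure_mono hsub).trans ((measure_iUnion_le _).trans ?_)
    rw [CoopAux.T]
    refine ENNReal.tsum_le_tsum fun v => ?_
    by_cases hv : min (v (Fin.last n)).1 (v (Fin.last n)).2 ≠ 0
    · have hset : {ω | (∀ k ≤ n, XY k ω = CoopAux.ext (n + 1) v k) ∧
          min (v (Fin.last n)).1 (v (Fin.last n)).2 ≠ 0} =
          {ω | ∀ k ≤ n, XY k ω = CoopAux.ext (n + 1) v k} := by
        ext ω; simp [hv]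
      rw [hset, hXY n (CoopAux.ext (n + 1) v)]
      have h1 : (1 : ℝ≥0∞) ≤
          ((min (v (Fin.last n)).1 (v (Fin.last n)).2 : ℕ) : ℝ≥0∞) := by
        exact_mod_cast Nat.one_le_iff_ne_zero.2 hv
      exact le_mul_of_one_le_left zero_le h1
    · have hset : {ω | (∀ k ≤ n, XY k ω = CoopAux.ext (n + 1) v k) ∧
          min (v (Fin.last n)).1 (v (Fin.last n)).2 ≠ 0} = (∅ : Set Ω) := by
        ext ω; simp [hv]
      rw [hset, measure_empty]
      exact zero_le
  have hTle : ∀ n, CoopAux.T p q x y n ≤ r ^ n * M :=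
    fun n => CoopAux.T_le hp0 hp1 hq0 hq1 x y n
  have hsum : (∑' n, P (S n)) ≠ ∞ := by
    refine ne_top_of_le_ne_top ?_ (ENNReal.tsum_le_tsum fun n => (hS n).trans (hTle n))
    rw [ENNReal.tsum_mul_right, ENNReal.tsum_geometric]
    refine ENNReal.mul_ne_top (ENNReal.inv_ne_top.2 fun h => ?_) ?_
    · exact hr1.not_ge (tsub_eq_zero_iff_le.1 h)
    · rw [hM]; exact ENNReal.natCast_ne_top _
  refine ⟨?_, ?_⟩
  · have hae : ∀ᵐ ω ∂P, ∀ᶠ n in atTop, ω ∉ S n :=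
      MeasureTheory.ae_eventually_notMem hsum
    filter_upwards [hae] with ω hω
    refine Tendsto.congr' ?_ tendsto_const_nhds
    filter_upwards [hω] with n hn
    exact (not_not.1 hn).symm
  · have hA : ∀ n : ℕ, P {ω | ∀ m : ℕ, min (XY m ω).1 (XY m ω).2 ≠ 0} ≤ r ^ n * M :=
      fun n => (measure_mono fun ω (hω : ∀ m : ℕ, min (XY m ω).1 (XY m ω).2 ≠ 0) => hω n).trans ((hS n).trans (hTle n))
    have hlim : Tendsto (fun n : ℕ => r ^ n * M) atTop (nhds 0) := by
      have h0 := ENNReal.tendsto_pow_atTop_nhds_zero_of_lt_one hr1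
      have h2 := ENNReal.Tendsto.mul_const h0
        (Or.inr (show M ≠ ⊤ by rw [hM]; exact ENNReal.natCast_ne_top _))
      simpa using h2
    exact le_antisymm (ge_of_tendsto' hlim hA) zero_le
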